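/- arXiv:math/0603542 — 2 statements merged into one kernel-verified Lean document; each statement's English description precedes it below -/
import Mathlib

section
/- The Euler adic transformation T is ergodic with respect to the symmetric measure η: for every Borel set A ⊆ X such that for all x ∈ X \ X_max one has x ∈ A if and only if T(x) ∈ A, either η(A) = 0 or η(A) = 1. -/
open MeasureTheory Filter
open scoped ENNReal

/-- The Euler path space: a point is an infinite edge path in the Euler graph,
`x n : Fin (n+2)` being the label of the edge chosen from level `n` to level `n+1`. -/
abbrev EulerPath : Type := ∀ n : ℕ, Fin (n + 2)

/-- Vertex labels: `kv x n` is the `k` with the path `x` passing through vertex `(n,k)`.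
A label `(x n : ℕ) ≤ kv x n` is a left turn (edge to `(n+1, kv x n)`), a larger label
is a right turn (edge to `(n+1, kv x n + 1)`). -/
def kv (x : EulerPath) : ℕ → ℕ
  | 0 => 0
  | n + 1 => if (x n : ℕ) ≤ kv x n then kv x n else kv x n + 1

/-- The symmetric measure: the product over `n` of the uniform probability measures on
`Fin (n+2)`, characterized as the probability measure giving each cylinder of length `n`
the measure `∏_{i<n} 1/(i+2)`. -/
def IsSymmetricMeasure (η : Measure EulerPath) : Prop :=
  IsProbabilityMeasure η ∧
    ∀ (n : ℕ) (c : EulerPath),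
      η {x | ∀ i < n, x i = c i} = ∏ i ∈ Finset.range n, ((i : ℝ≥0∞) + 2)⁻¹

/-- The strict partial order on paths: `x` is less than `y` if they eventually agree,
pass through the same vertex just after the last disagreement, and at the last
disagreement the edge of `x` strictly precedes the edge of `y` in the order on edges
into that common vertex: the right edges (those from the source with the smaller
vertex label) come before the left edges, and edges with the same source are ordered
by their outgoing labels. -/
def pathLT (x y : EulerPath) : Prop :=
  ∃ N, (∀ n, N < n → x n = y n) ∧ kv x (N + 1) = kv y (N + 1) ∧
    (kv x N < kv y N ∨ (kv x N = kv y N ∧ (x N : ℕ) < (y N : ℕ)))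

/-- The set of maximal paths. -/
def Xmax : Set EulerPath := {x | ¬ ∃ y, pathLT x y}

/-- The set of minimal paths. -/
def Xmin : Set EulerPath := {x | ¬ ∃ y, pathLT y x}

/-- `x j` is the largest edge into the vertex `(j+1, kv x (j+1))`: either it is the left
edge with the largest label, or it is the unique edge into the vertex `(j+1, j+1)`. -/
def IsMaxEdge (x : EulerPath) (j : ℕ) : Prop :=
  (x j : ℕ) = kv x j ∨ kv x (j + 1) = j + 1

instance (x : EulerPath) (j : ℕ) : Decidable (IsMaxEdge x j) := by
  unfold IsMaxEdge; infer_instance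

open scoped Classical

/-- The Euler adic transformation: if `j` is the least index such that `x j` is not the
largest edge into `(j+1, kv x (j+1))`, then `T x` agrees with `x` in coordinates `> j`,
has as `j`-th edge the next larger edge into `(j+1, kv x (j+1))` (the next right edge if
`x j` is a right edge that is not the last one, the first left edge if `x j` is the last
right edge, and the next left edge if `x j` is a left edge), and its first `j` edges
form the minimal path from the root `(0,0)` to the source vertex `(j, k')` of that edge
(which goes through `(i, max (k' - (j - i)) 0)` at each level `i ≤ j`, always using the
minimal edge). On paths all of whose edges are maximal, `T` is defined as the identity. -/
noncomputable def eulerAdic (x : EulerPath) : EulerPath :=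
  if h : ∃ j, ¬ IsMaxEdge x j then
    let j := Nat.find h
    -- the source vertex `(j, k')` of the next larger edge into `(j+1, kv x (j+1))`
    let k' := if (x j : ℕ) = j + 1 then kv x (j + 1) else kv x j
    fun n =>
      if j < n then x n
      else if hn : n = j then
        -- the next larger edge into `(j+1, kv x (j+1))`
        ⟨if (x j : ℕ) = j + 1 then 0 else (x j : ℕ) + 1, by
          have h2 := (x j).isLt
          split_ifs with h' <;> omega⟩
      else
        -- the minimal path from the root `(0,0)` to the vertex `(j, k')`
        ⟨(if n + 1 ≤ j - k' then 0 else k' + n + 1 - j) % (n + 2),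
          Nat.mod_lt _ (by omega)⟩
  else x


-- ===================== basic kv lemmas =====================

lemma kv_succ (x : EulerPath) (n : ℕ) :
    kv x (n + 1) = if (x n : ℕ) ≤ kv x n then kv x n else kv x n + 1 := rfl

lemma kv_le (x : EulerPath) : ∀ n, kv x n ≤ n
  | 0 => le_refl 0
  | n + 1 => by
    have := kv_le x n
    rw [kv_succ]; split <;> omega

/-- `kv x n` depends only on the coordinates below `n`. -/
lemma kv_depends {x y : EulerPath} : ∀ {n : ℕ}, (∀ m, m < n → x m = y m) → kv x n = kv y n
  | 0, _ => rfl
  | n + 1, h => by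
    have ih := kv_depends (x := x) (y := y) (n := n) (fun m hm => h m (by omega))
    rw [kv_succ, kv_succ, ih, h n (by omega)]

lemma kv_eq_of_eq_on {x y : EulerPath} {N : ℕ} (h : ∀ m, N ≤ m → x m = y m)
    (hk : kv x N = kv y N) : ∀ m, N ≤ m → kv x m = kv y m := by
  intro m hm
  induction m with
  | zero => rfl
  | succ n ih =>
    rcases Nat.lt_or_ge N (n + 1) with h1 | h1
    · have hn : N ≤ n := by omega
      rw [kv_succ, kv_succ, ih hn, h n hn]
    · have : N = n + 1 := by omega
      exact this ▸ hk

lemma kv_mono_of_eq_on {x y : EulerPath} {N : ℕ} (h : ∀ m, N ≤ m → x m = y m)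
    (hk : kv y N ≤ kv x N) : ∀ m, N ≤ m → kv y m ≤ kv x m := by
  intro m hm
  induction m with
  | zero => exact le_refl 0
  | succ n ih =>
    rcases Nat.lt_or_ge N (n + 1) with h1 | h1
    · have hn : N ≤ n := by omega
      have ihn := ih hn
      rw [kv_succ, kv_succ, h n hn]
      split <;> split <;> omega
    · have : N = n + 1 := by omega
      exact this ▸ hk

lemma kv_top {x : EulerPath} {n : ℕ} (h : kv x (n + 1) = n + 1) :
    kv x n = n ∧ (x n : ℕ) = n + 1 := by
  have h1 := kv_le x n
  have h2 := (x n).isLt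
  rw [kv_succ] at h
  split at h <;> omega
-- ===================== the transformation =====================

section Tlemmas

variable {x : EulerPath}

/-- The source vertex label `k'` used in the definition of `eulerAdic`. -/
noncomputable def kA (x : EulerPath) (hx : ∃ j, ¬ IsMaxEdge x j) : ℕ :=
  if (x (Nat.find hx) : ℕ) = Nat.find hx + 1 then kv x (Nat.find hx + 1) else kv x (Nat.find hx)

lemma findspec (hx : ∃ j, ¬ IsMaxEdge x j) :
    (x (Nat.find hx) : ℕ) ≠ kv x (Nat.find hx) ∧ kv x (Nat.find hx + 1) ≠ Nat.find hx + 1 := by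
  have h := Nat.find_spec hx
  unfold IsMaxEdge at h
  exact ⟨fun h1 => h (Or.inl h1), fun h2 => h (Or.inr h2)⟩

lemma kA_le (hx : ∃ j, ¬ IsMaxEdge x j) : kA x hx ≤ Nat.find hx := by
  obtain ⟨h1, h2⟩ := findspec hx
  have h3 := kv_le x (Nat.find hx)
  have h4 := kv_le x (Nat.find hx + 1)
  unfold kA; split <;> omega

lemma eulerAdic_gt (hx : ∃ j, ¬ IsMaxEdge x j) {n : ℕ} (h : Nat.find hx < n) :
    eulerAdic x n = x n := by
  rw [eulerAdic, dif_pos hx]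
  simp only [if_pos h]

lemma eulerAdic_at_j (hx : ∃ j, ¬ IsMaxEdge x j) :
    (eulerAdic x (Nat.find hx) : ℕ) =
      if (x (Nat.find hx) : ℕ) = Nat.find hx + 1 then 0 else (x (Nat.find hx) : ℕ) + 1 := by
  rw [eulerAdic, dif_pos hx]
  simp

lemma eulerAdic_lt (hx : ∃ j, ¬ IsMaxEdge x j) {n : ℕ} (h : n < Nat.find hx) :
    (eulerAdic x n : ℕ) =
      if n + 1 ≤ Nat.find hx - kA x hx then 0 else kA x hx + n + 1 - Nat.find hx := by
  have hk := kA_le hx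
  rw [eulerAdic, dif_pos hx]
  simp only [if_neg (by omega : ¬ Nat.find hx < n), dif_neg (by omega : ¬ n = Nat.find hx)]
  show (if n + 1 ≤ Nat.find hx - kA x hx then 0 else kA x hx + n + 1 - Nat.find hx) % (n+2) = _
  split
  · simp
  · exact Nat.mod_eq_of_lt (by omega)

lemma kv_eulerAdic_le (hx : ∃ j, ¬ IsMaxEdge x j) :
    ∀ n, n ≤ Nat.find hx → kv (eulerAdic x) n = kA x hx - (Nat.find hx - n) := by
  have hk := kA_le hx
  intro n
  induction n with
  | zero => intro _; simp [kv]; omega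
  | succ n ih =>
    intro hn
    have hlt : n < Nat.find hx := by omega
    have ihn := ih (by omega)
    rw [kv_succ, eulerAdic_lt hx hlt, ihn]
    split <;> split <;> omega

lemma kv_eulerAdic_j (hx : ∃ j, ¬ IsMaxEdge x j) :
    kv (eulerAdic x) (Nat.find hx) = kA x hx := by
  have := kv_eulerAdic_le hx (Nat.find hx) le_rfl
  have hk := kA_le hx
  omega

lemma kv_eulerAdic_j1 (hx : ∃ j, ¬ IsMaxEdge x j) :
    kv (eulerAdic x) (Nat.find hx + 1) = kv x (Nat.find hx + 1) := by
  obtain ⟨h1, h2⟩ := findspec hx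
  have h3 := kv_le x (Nat.find hx)
  have h4 := (x (Nat.find hx)).isLt
  rw [kv_succ, kv_eulerAdic_j hx, eulerAdic_at_j hx]
  unfold kA
  rw [kv_succ x (Nat.find hx)]
  split_ifs <;> omega

lemma kv_eulerAdic_ge (hx : ∃ j, ¬ IsMaxEdge x j) :
    ∀ n, Nat.find hx + 1 ≤ n → kv (eulerAdic x) n = kv x n := by
  exact kv_eq_of_eq_on (fun m hm => eulerAdic_gt hx (by omega)) (kv_eulerAdic_j1 hx)

lemma pathLT_eulerAdic (hx : ∃ j, ¬ IsMaxEdge x j) : pathLT x (eulerAdic x) := by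
  refine ⟨Nat.find hx, fun n hn => (eulerAdic_gt hx hn).symm, (kv_eulerAdic_j1 hx).symm, ?_⟩
  obtain ⟨h1, h2⟩ := findspec hx
  have h3 := kv_le x (Nat.find hx)
  have h4 := (x (Nat.find hx)).isLt
  have h5 := kv_eulerAdic_j hx
  have h6 := eulerAdic_at_j hx
  unfold kA at h5
  by_cases hc : (x (Nat.find hx) : ℕ) = Nat.find hx + 1
  · left
    rw [if_pos hc] at h5
    have h7 := kv_succ x (Nat.find hx)
    rw [h5, h7]
    split <;> omega
  · right
    rw [if_neg hc] at h5
    rw [if_neg hc] at h6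
    exact ⟨by omega, by omega⟩

lemma not_mem_Xmax (hx : ∃ j, ¬ IsMaxEdge x j) : x ∉ Xmax := by
  intro h
  exact h ⟨eulerAdic x, pathLT_eulerAdic hx⟩

end Tlemmas
-- ===================== rank function and class invariance =====================

def rho (x : EulerPath) (n : ℕ) : ℕ :=
  if (x n : ℕ) ≤ kv x n then (x n : ℕ) + (n + 2) else (x n : ℕ)

lemma rho_lt (x : EulerPath) (n : ℕ) : rho x n < 2 * n + 4 := by
  have h1 := (x n).isLt
  unfold rho; split <;> omega

def phi (N : ℕ) (x : EulerPath) : ℕ := ∑ n ∈ Finset.range N, rho x n * (2 * N + 4) ^ n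

lemma geom_aux (C : ℕ) (hC : 1 ≤ C) : ∀ m, ∑ n ∈ Finset.range m, (C - 1) * C ^ n = C ^ m - 1
  | 0 => by simp
  | m + 1 => by
    rw [Finset.sum_range_succ, geom_aux C hC m, pow_succ]
    have h2 : (C - 1) * C ^ m = C * C ^ m - C ^ m := by rw [Nat.sub_mul, one_mul]
    have h3 : C ^ m ≤ C * C ^ m := Nat.le_mul_of_pos_left _ (by omega)
    have h4 : C ^ m * C = C * C ^ m := mul_comm _ _
    have h5 : 1 ≤ C ^ m := Nat.one_le_pow _ _ (by omega)
    rw [h2, h4]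
    omega

lemma phi_partial_lt (N : ℕ) (x : EulerPath) {j : ℕ} (hj : j ≤ N) :
    ∑ n ∈ Finset.range j, rho x n * (2 * N + 4) ^ n < (2 * N + 4) ^ j := by
  have hb : ∑ n ∈ Finset.range j, rho x n * (2 * N + 4) ^ n ≤
      ∑ n ∈ Finset.range j, (2 * N + 4 - 1) * (2 * N + 4) ^ n := by
    refine Finset.sum_le_sum fun n hn => Nat.mul_le_mul_right _ ?_
    have h1 := rho_lt x n
    have h2 : n < j := Finset.mem_range.mp hn
    omega
  rw [geom_aux (2 * N + 4) (by omega) j] at hb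
  have h5 : 1 ≤ (2 * N + 4) ^ j := Nat.one_le_pow _ _ (by omega)
  omega

lemma phi_lt (N : ℕ) (x : EulerPath) : phi N x < (2 * N + 4) ^ N :=
  phi_partial_lt N x le_rfl

lemma rho_eulerAdic_gt {x : EulerPath} (hx : ∃ j, ¬ IsMaxEdge x j) {n : ℕ}
    (h : Nat.find hx < n) : rho (eulerAdic x) n = rho x n := by
  unfold rho
  rw [eulerAdic_gt hx h, kv_eulerAdic_ge hx n (by omega)]

lemma rho_eulerAdic_j {x : EulerPath} (hx : ∃ j, ¬ IsMaxEdge x j) :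
    rho x (Nat.find hx) + 1 ≤ rho (eulerAdic x) (Nat.find hx) := by
  obtain ⟨h1, h2⟩ := findspec hx
  have h3 := kv_le x (Nat.find hx)
  have h4 := (x (Nat.find hx)).isLt
  have h5 := kv_eulerAdic_j hx
  have h6 := eulerAdic_at_j hx
  have h7 := kv_succ x (Nat.find hx)
  unfold kA at h5
  unfold rho
  rw [h5, h6]
  split at h7 <;> split_ifs <;> omega

lemma phi_increase {x : EulerPath} (hx : ∃ j, ¬ IsMaxEdge x j) {N : ℕ}
    (hjN : Nat.find hx < N) : phi N x < phi N (eulerAdic x) := by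
  set j := Nat.find hx with hj
  set C := 2 * N + 4 with hC
  have hsplit : ∀ y : EulerPath, phi N y = (∑ n ∈ Finset.range j, rho y n * C ^ n +
      rho y j * C ^ j) + ∑ n ∈ Finset.Ico (j + 1) N, rho y n * C ^ n := by
    intro y
    rw [phi, Finset.range_eq_Ico,
      ← Finset.sum_Ico_consecutive _ (Nat.zero_le (j + 1)) (by omega : j + 1 ≤ N),
      ← Finset.range_eq_Ico, Finset.sum_range_succ]
  have h1 : ∑ n ∈ Finset.range j, rho x n * C ^ n < C ^ j := phi_partial_lt N x (by omega)
  have h2 := rho_eulerAdic_j hx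
  have h3 : ∑ n ∈ Finset.Ico (j + 1) N, rho x n * C ^ n =
      ∑ n ∈ Finset.Ico (j + 1) N, rho (eulerAdic x) n * C ^ n := by
    refine Finset.sum_congr rfl fun n hn => ?_
    have hn' : j < n := by
      have := Finset.mem_Ico.mp hn
      omega
    rw [rho_eulerAdic_gt hx hn']
  have h4 : (rho x j + 1) * C ^ j ≤ rho (eulerAdic x) j * C ^ j := Nat.mul_le_mul_right _ h2
  rw [Nat.add_mul, one_mul] at h4
  have h6 := Nat.zero_le (∑ n ∈ Finset.range j, rho (eulerAdic x) n * C ^ n)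
  rw [hsplit x, hsplit (eulerAdic x), ← h3]
  omega

/-- Two paths are related at level `N` if they agree in all coordinates from `N` on and
pass through the same vertex at level `N`. -/
def ERel (N : ℕ) (x y : EulerPath) : Prop :=
  (∀ m, N ≤ m → x m = y m) ∧ kv x N = kv y N

lemma ERel.refl (N : ℕ) (x : EulerPath) : ERel N x x := ⟨fun _ _ => rfl, rfl⟩

lemma ERel.symm {N : ℕ} {x y : EulerPath} (h : ERel N x y) : ERel N y x :=
  ⟨fun m hm => (h.1 m hm).symm, h.2.symm⟩

lemma ERel.trans {N : ℕ} {x y z : EulerPath} (h1 : ERel N x y) (h2 : ERel N y z) : ERel N x z :=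
  ⟨fun m hm => (h1.1 m hm).trans (h2.1 m hm), h1.2.trans h2.2⟩

lemma rel_eulerAdic {x : EulerPath} (hx : ∃ j, ¬ IsMaxEdge x j) {N : ℕ}
    (hjN : Nat.find hx < N) : ERel N x (eulerAdic x) :=
  ⟨fun m hm => (eulerAdic_gt hx (by omega)).symm, (kv_eulerAdic_ge hx N (by omega)).symm⟩

lemma max_edge_det {x y : EulerPath} {s : ℕ} (hx : IsMaxEdge x s) (hy : IsMaxEdge y s)
    (h : kv x (s + 1) = kv y (s + 1)) : kv x s = kv y s ∧ x s = y s := by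
  by_cases htop : kv x (s + 1) = s + 1
  · obtain ⟨ha, hb⟩ := kv_top htop
    obtain ⟨hc, hd⟩ := kv_top (h ▸ htop)
    exact ⟨by omega, Fin.ext (by omega)⟩
  · have hx1 : (x s : ℕ) = kv x s := hx.resolve_right htop
    have hy1 : (y s : ℕ) = kv y s := hy.resolve_right fun hc => htop (h.trans hc)
    have e1 : kv x (s + 1) = kv x s := by rw [kv_succ, if_pos (le_of_eq hx1)]
    have e2 : kv y (s + 1) = kv y s := by rw [kv_succ, if_pos (le_of_eq hy1)]
    exact ⟨by omega, Fin.ext (by omega)⟩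

lemma etop_unique {N : ℕ} {x y : EulerPath} (hrel : ERel N x y)
    (hx : ∀ n, n < N → IsMaxEdge x n) (hy : ∀ n, n < N → IsMaxEdge y n) : x = y := by
  have key : ∀ i, kv x (N - i) = kv y (N - i) ∧ ∀ n, N - i ≤ n → x n = y n := by
    intro i
    induction i with
    | zero => exact ⟨by simpa using hrel.2, fun n hn => hrel.1 n (by omega)⟩
    | succ i ih =>
      by_cases hiN : N ≤ i
      · have e1 : N - i = 0 := by omega
        have e2 : N - (i + 1) = 0 := by omega
        rw [e2, ← e1]
        exact ih
      · obtain ⟨hk, hcoord⟩ := ih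
        have hs : N - i = (N - (i + 1)) + 1 := by omega
        set s := N - (i + 1) with hsdef
        rw [hs] at hk
        obtain ⟨ha, hb⟩ := max_edge_det (hx s (by omega)) (hy s (by omega)) hk
        refine ⟨ha, fun n hn => ?_⟩
        rcases Nat.eq_or_lt_of_le hn with h | h
        · exact h ▸ hb
        · exact hcoord n (by omega)
  funext n
  exact (key N).2 n (by omega)

section WithA

variable (A : Set EulerPath) (hinv : ∀ x, x ∉ Xmax → (x ∈ A ↔ eulerAdic x ∈ A))

include hinv

lemma reach_top (N : ℕ) :
    ∀ (m : ℕ) (x : EulerPath), (2 * N + 4) ^ N ≤ phi N x + m →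
      ∃ z, ERel N x z ∧ (∀ n, n < N → IsMaxEdge z n) ∧ (x ∈ A ↔ z ∈ A) := by
  intro m
  induction m with
  | zero =>
    intro x hb
    have := phi_lt N x
    omega
  | succ m ih =>
    intro x hb
    by_cases hall : ∀ n, n < N → IsMaxEdge x n
    · exact ⟨x, ERel.refl N x, hall, Iff.rfl⟩
    · push_neg at hall
      obtain ⟨n0, hn0N, hn0⟩ := hall
      have hx : ∃ j, ¬ IsMaxEdge x j := ⟨n0, hn0⟩
      have hjN : Nat.find hx < N := lt_of_le_of_lt (Nat.find_min' hx hn0) hn0N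
      have hphi := phi_increase hx hjN
      obtain ⟨z, hz1, hz2, hz3⟩ := ih (eulerAdic x) (by omega)
      exact ⟨z, (rel_eulerAdic hx hjN).trans hz1, hz2,
        (hinv x (not_mem_Xmax hx)).trans hz3⟩

lemma class_inv {N : ℕ} {x y : EulerPath} (h : ERel N x y) : x ∈ A ↔ y ∈ A := by
  obtain ⟨zx, hx1, hx2, hx3⟩ := reach_top A hinv N ((2 * N + 4) ^ N) x (Nat.le_add_left _ _)
  obtain ⟨zy, hy1, hy2, hy3⟩ := reach_top A hinv N ((2 * N + 4) ^ N) y (Nat.le_add_left _ _)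
  have hz : zx = zy := etop_unique ((hx1.symm.trans h).trans hy1) hx2 hy2
  rw [hx3, hz, ← hy3]

end WithA
-- ===================== cylinders and the measure =====================

def zeroPath : EulerPath := fun _ => ⟨0, by omega⟩

section Meas

variable {η : Measure EulerPath} (hη : IsSymmetricMeasure η)

lemma cyl_measurable (S : Finset ℕ) (v : EulerPath) :
    MeasurableSet {x : EulerPath | ∀ i ∈ S, x i = v i} := by
  have h : {x : EulerPath | ∀ i ∈ S, x i = v i} =
      ⋂ i ∈ S, (fun x : EulerPath => x i) ⁻¹' {v i} := by
    ext x; simp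
  rw [h]
  exact MeasurableSet.biInter S.countable_toSet fun i _ =>
    (measurable_pi_apply i) (measurableSet_singleton (v i))

include hη

lemma prod_formula_full (M : ℕ) (v : EulerPath) :
    η {x | ∀ i ∈ Finset.range M, x i = v i} = ∏ i ∈ Finset.range M, ((i : ℝ≥0∞) + 2)⁻¹ := by
  have hset : {x : EulerPath | ∀ i ∈ Finset.range M, x i = v i} = {x | ∀ i < M, x i = v i} := by
    ext x; simp
  rw [hset]
  exact hη.2 M v

lemma prod_formula : ∀ (d M : ℕ) (S : Finset ℕ), S ⊆ Finset.range M →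
    (Finset.range M \ S).card ≤ d → ∀ v : EulerPath,
    η {x | ∀ i ∈ S, x i = v i} = ∏ i ∈ S, ((i : ℝ≥0∞) + 2)⁻¹ := by
  intro d
  induction d with
  | zero =>
    intro M S hsub hcard v
    have hS : S = Finset.range M :=
      Finset.Subset.antisymm hsub (Finset.sdiff_eq_empty_iff_subset.mp
        (Finset.card_eq_zero.mp (Nat.le_zero.mp hcard)))
    rw [hS]
    exact prod_formula_full hη M v
  | succ d ih =>
    intro M S hsub hcard v
    by_cases hempty : Finset.range M \ S = ∅
    · have hS : S = Finset.range M :=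
        Finset.Subset.antisymm hsub (Finset.sdiff_eq_empty_iff_subset.mp hempty)
      rw [hS]
      exact prod_formula_full hη M v
    · obtain ⟨j, hj⟩ := Finset.nonempty_iff_ne_empty.mpr hempty
      have hjM : j ∈ Finset.range M := (Finset.mem_sdiff.mp hj).1
      have hjS : j ∉ S := (Finset.mem_sdiff.mp hj).2
      have hdecomp : {x : EulerPath | ∀ i ∈ S, x i = v i} =
          ⋃ w : Fin (j + 2), {x | ∀ i ∈ insert j S, x i = Function.update v j w i} := by
        ext x
        simp only [Set.mem_iUnion, Set.mem_setOf_eq]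
        constructor
        · intro hx
          refine ⟨x j, fun i hi => ?_⟩
          rcases Finset.mem_insert.mp hi with rfl | hi
          · rw [Function.update_self]
          · rw [Function.update_of_ne (by intro he; exact hjS (he ▸ hi))]
            exact hx i hi
        · rintro ⟨w, hw⟩ i hi
          have h := hw i (Finset.mem_insert_of_mem hi)
          rwa [Function.update_of_ne (by intro he; exact hjS (he ▸ hi))] at h
      have hdisj : Pairwise (Function.onFun Disjoint
          (fun w : Fin (j + 2) => {x : EulerPath | ∀ i ∈ insert j S, x i = Function.update v j w i})) := by
        intro w w' hww'
        rw [Function.onFun, Set.disjoint_left]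
        intro x hx hx'
        apply hww'
        have h1 := hx j (Finset.mem_insert_self j S)
        have h2 := hx' j (Finset.mem_insert_self j S)
        rw [Function.update_self] at h1 h2
        rw [← h1, ← h2]
      rw [hdecomp, measure_iUnion hdisj fun w => cyl_measurable _ _]
      have hval : ∀ w : Fin (j + 2),
          η {x | ∀ i ∈ insert j S, x i = Function.update v j w i} =
            ∏ i ∈ insert j S, ((i : ℝ≥0∞) + 2)⁻¹ := by
        intro w
        refine ih M (insert j S) ?_ ?_ _
        · intro i hi
          rcases Finset.mem_insert.mp hi with rfl | hi
          · exact hjM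
          · exact hsub hi
        · have he : Finset.range M \ insert j S = (Finset.range M \ S).erase j := by
            ext i
            simp only [Finset.mem_sdiff, Finset.mem_erase, Finset.mem_insert]
            tauto
          rw [he, Finset.card_erase_of_mem hj] at *
          omega
      rw [tsum_congr hval, tsum_fintype, Finset.sum_const, Finset.card_univ, Fintype.card_fin,
        Finset.prod_insert hjS, nsmul_eq_mul]
      rw [← mul_assoc]
      have hcancel : ((j + 2 : ℕ) : ℝ≥0∞) * ((j : ℝ≥0∞) + 2)⁻¹ = 1 := by
        rw [show ((j + 2 : ℕ) : ℝ≥0∞) = (j : ℝ≥0∞) + 2 by push_cast; ring]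
        exact ENNReal.mul_inv_cancel (ne_of_gt (lt_of_lt_of_le two_pos le_add_self)) (by
          exact ENNReal.add_ne_top.mpr ⟨ENNReal.natCast_ne_top j, by norm_num⟩)
      rw [hcancel, one_mul]

lemma prod_formula' (S : Finset ℕ) (v : EulerPath) :
    η {x | ∀ i ∈ S, x i = v i} = ∏ i ∈ S, ((i : ℝ≥0∞) + 2)⁻¹ := by
  refine prod_formula hη ((Finset.range (S.sup id + 1) \ S).card) (S.sup id + 1) S ?_ le_rfl v
  intro i hi
  simp only [Finset.mem_range]
  have h1 := Finset.le_sup (f := id) hi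
  have h2 : id i = i := rfl
  omega

end Meas
-- ===================== sets depending on finitely many coordinates =====================

/-- Prefixes of length `M`. -/
def PreM (M : ℕ) := ∀ i : Fin M, Fin ((i : ℕ) + 2)

noncomputable instance (M : ℕ) : Fintype (PreM M) := by unfold PreM; infer_instance

def extPre {M : ℕ} (c : PreM M) : EulerPath :=
  fun n => if h : n < M then c ⟨n, h⟩ else ⟨0, by omega⟩

lemma extPre_lt {M : ℕ} (c : PreM M) {n : ℕ} (h : n < M) : extPre c n = c ⟨n, h⟩ :=
  dif_pos h

section Meas2

variable {η : Measure EulerPath} (hη : IsSymmetricMeasure η)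

include hη

lemma depends_measure (M : ℕ) (E : Set EulerPath)
    (hdep : ∀ x y : EulerPath, (∀ i, i < M → x i = y i) → x ∈ E → y ∈ E) :
    η E = ((Finset.univ.filter (fun c : PreM M => extPre c ∈ E)).card : ℝ≥0∞) *
      ∏ i ∈ Finset.range M, ((i : ℝ≥0∞) + 2)⁻¹ := by
  have hE : E = ⋃ c ∈ Finset.univ.filter (fun c : PreM M => extPre c ∈ E),
      {x | ∀ i ∈ Finset.range M, x i = extPre c i} := by
    ext x
    simp only [Set.mem_iUnion, Finset.mem_filter, Finset.mem_univ, true_and,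
      Set.mem_setOf_eq, Finset.mem_range, exists_prop]
    constructor
    · intro hx
      refine ⟨fun i => x i, ?_, ?_⟩
      · refine hdep x _ (fun i hi => ?_) hx
        exact (extPre_lt (M := M) (fun i => x i) hi).symm
      · intro i hi
        exact (extPre_lt (M := M) (fun i => x i) hi).symm
    · rintro ⟨c, hc, hagree⟩
      refine hdep (extPre c) x (fun i hi => (hagree i hi).symm) hc
  have hdisj : Set.PairwiseDisjoint
      (↑(Finset.univ.filter (fun c : PreM M => extPre c ∈ E)))
      (fun c : PreM M => {x : EulerPath | ∀ i ∈ Finset.range M, x i = extPre c i}) := by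
    intro c hc c' hc' hcc'
    rw [Function.onFun, Set.disjoint_left]
    intro x hx hx'
    apply hcc'
    funext i
    have h1 := hx (i : ℕ) (Finset.mem_range.mpr i.isLt)
    have h2 := hx' (i : ℕ) (Finset.mem_range.mpr i.isLt)
    rw [extPre_lt _ i.isLt] at h1 h2
    rw [← Fin.eta i i.isLt]
    rw [← h1, ← h2]
  calc η E = η (⋃ c ∈ Finset.univ.filter (fun c : PreM M => extPre c ∈ E),
        {x | ∀ i ∈ Finset.range M, x i = extPre c i}) := by rw [← hE]
    _ = ∑ c ∈ Finset.univ.filter (fun c : PreM M => extPre c ∈ E),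
        η {x | ∀ i ∈ Finset.range M, x i = extPre c i} :=
        measure_biUnion_finset hdisj (fun c _ => cyl_measurable _ _)
    _ = _ := by
        rw [Finset.sum_congr rfl (fun c _ => prod_formula' hη (Finset.range M) (extPre c)),
          Finset.sum_const, nsmul_eq_mul]

lemma measure_step (M : ℕ) (E E' : Set EulerPath) (w : EulerPath → ℕ)
    (hdepE : ∀ x y : EulerPath, (∀ i, i < M → x i = y i) → x ∈ E → y ∈ E)
    (hdepE' : ∀ x y : EulerPath, (∀ i, i < M + 1 → x i = y i) → x ∈ E' → y ∈ E')
    (hdepw : ∀ x y : EulerPath, (∀ i, i < M → x i = y i) → w x = w y)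
    (hwlt : ∀ x, w x < M + 2)
    (hsub : E' ⊆ E)
    (havoid : ∀ x ∈ E', (x M : ℕ) ≠ w x) :
    ((M : ℝ≥0∞) + 2) * η E' ≤ ((M : ℝ≥0∞) + 1) * η E := by
  classical
  set SS := Finset.univ.filter (fun c : PreM M => extPre c ∈ E) with hSS
  set SS' := Finset.univ.filter (fun c : PreM (M + 1) => extPre c ∈ E') with hSS'
  -- restriction map and last coordinate
  have hcast : ∀ (c : PreM (M + 1)) (i : Fin M), ((Fin.castSucc i : ℕ) + 2) = ((i : ℕ) + 2) := by
    intro c i; rfl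
  let r : PreM (M + 1) → PreM M := fun c i => c (Fin.castSucc i)
  let wf : PreM M → Fin (M + 2) := fun b => ⟨w (extPre b), hwlt _⟩
  have hagree : ∀ (c : PreM (M + 1)) (i : ℕ), i < M → extPre c i = extPre (r c) i := by
    intro c i hi
    rw [extPre_lt c (by omega), extPre_lt (r c) hi]
    rfl
  have hcard : SS'.card ≤ SS.card * (M + 1) := by
    have hmaps : ∀ c ∈ SS', (r c, c ⟨M, by omega⟩) ∈
        SS.biUnion (fun b => ({b} : Finset (PreM M)) ×ˢ (Finset.univ.erase (wf b))) := by
      intro c hc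
      have hcE' : extPre c ∈ E' := (Finset.mem_filter.mp hc).2
      rw [Finset.mem_biUnion]
      refine ⟨r c, ?_, ?_⟩
      · rw [hSS, Finset.mem_filter]
        exact ⟨Finset.mem_univ _, hdepE _ _ (hagree c) (hsub hcE')⟩
      · rw [Finset.mem_product]
        refine ⟨Finset.mem_singleton_self _, Finset.mem_erase.mpr ⟨?_, Finset.mem_univ _⟩⟩
        intro heq
        have h1 := havoid _ hcE'
        have h2 : (extPre c M : ℕ) = (c ⟨M, by omega⟩ : ℕ) := by rw [extPre_lt c (by omega)]
        have h3 : w (extPre c) = w (extPre (r c)) := hdepw _ _ (hagree c)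
        have h4 : (c ⟨M, by omega⟩ : ℕ) = w (extPre (r c)) := congrArg Fin.val heq
        rw [h2, h4, ← h3] at h1
        exact h1 rfl
    have hinj : Set.InjOn (fun c : PreM (M + 1) => (r c, c ⟨M, by omega⟩)) SS' := by
      intro c hc c' hc' hpsi
      have h1 : r c = r c' := congrArg Prod.fst hpsi
      have h2 : c ⟨M, by omega⟩ = c' ⟨M, by omega⟩ := congrArg Prod.snd hpsi
      funext i
      by_cases h : (i : ℕ) < M
      · have h3 := congrFun h1 ⟨(i : ℕ), h⟩
        have he : (Fin.castSucc (⟨(i : ℕ), h⟩ : Fin M)) = i := Fin.ext rfl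
        exact h3
      · have hiv := i.isLt
        have hi : i = ⟨M, by omega⟩ := by
          apply Fin.ext
          simp only [Fin.val_mk]
          omega
        rw [hi]; exact h2
    calc SS'.card ≤ (SS.biUnion (fun b => ({b} : Finset (PreM M)) ×ˢ
          (Finset.univ.erase (wf b)))).card :=
          Finset.card_le_card_of_injOn _ hmaps hinj
      _ ≤ ∑ b ∈ SS, (({b} : Finset (PreM M)) ×ˢ (Finset.univ.erase (wf b))).card :=
          Finset.card_biUnion_le
      _ ≤ ∑ b ∈ SS, (M + 1) := by
          refine Finset.sum_le_sum fun b _ => ?_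
          rw [Finset.card_product, Finset.card_singleton, one_mul,
            Finset.card_erase_of_mem (Finset.mem_univ _), Finset.card_univ, Fintype.card_fin]
          omega
      _ = SS.card * (M + 1) := by rw [Finset.sum_const, smul_eq_mul]
  rw [depends_measure hη (M + 1) E' hdepE', depends_measure hη M E hdepE,
    Finset.prod_range_succ]
  rw [← hSS, ← hSS']
  have hne0 : ((M : ℝ≥0∞) + 2) ≠ 0 := ne_of_gt (lt_of_lt_of_le two_pos le_add_self)
  have hnetop : ((M : ℝ≥0∞) + 2) ≠ ⊤ :=
    ENNReal.add_ne_top.mpr ⟨ENNReal.natCast_ne_top M, by norm_num⟩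
  have hcancel : ((M : ℝ≥0∞) + 2) * ((M : ℝ≥0∞) + 2)⁻¹ = 1 := ENNReal.mul_inv_cancel hne0 hnetop
  calc ((M : ℝ≥0∞) + 2) * ((SS'.card : ℝ≥0∞) *
        (( ∏ i ∈ Finset.range M, ((i : ℝ≥0∞) + 2)⁻¹) * ((M : ℝ≥0∞) + 2)⁻¹))
      = (((M : ℝ≥0∞) + 2) * ((M : ℝ≥0∞) + 2)⁻¹) * ((SS'.card : ℝ≥0∞) *
        ∏ i ∈ Finset.range M, ((i : ℝ≥0∞) + 2)⁻¹) := by ring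
    _ = (SS'.card : ℝ≥0∞) * ∏ i ∈ Finset.range M, ((i : ℝ≥0∞) + 2)⁻¹ := by
        rw [hcancel, one_mul]
    _ ≤ ((SS.card : ℝ≥0∞) * ((M : ℝ≥0∞) + 1)) * ∏ i ∈ Finset.range M, ((i : ℝ≥0∞) + 2)⁻¹ := by
        refine mul_le_mul_left ?_ _
        have : ((SS'.card : ℕ) : ℝ≥0∞) ≤ ((SS.card * (M + 1) : ℕ) : ℝ≥0∞) := by
          exact_mod_cast Nat.cast_le.mpr hcard
        push_cast at this
        exact this
    _ = ((M : ℝ≥0∞) + 1) * ((SS.card : ℝ≥0∞) * ∏ i ∈ Finset.range M, ((i : ℝ≥0∞) + 2)⁻¹) := by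
        ring

end Meas2
-- ===================== merging =====================

def minPre (N : ℕ) (x : EulerPath) : EulerPath :=
  fun n => if n < N then ⟨0, by omega⟩ else x n

lemma minPre_ge (N : ℕ) (x : EulerPath) {n : ℕ} (h : N ≤ n) : minPre N x n = x n :=
  if_neg (by omega)

lemma kv_minPre_zero (N : ℕ) (x : EulerPath) : ∀ n, n ≤ N → kv (minPre N x) n = 0 := by
  intro n
  induction n with
  | zero => intro _; rfl
  | succ n ih =>
    intro hn
    have h1 : minPre N x n = ⟨0, by omega⟩ := if_pos (by omega)
    rw [kv_succ, ih (by omega), h1]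
    simp

lemma kv_minPre_le (N : ℕ) (x : EulerPath) : ∀ m, N ≤ m → kv (minPre N x) m ≤ kv x m := by
  refine kv_mono_of_eq_on (fun m hm => (minPre_ge N x hm).symm) ?_
  rw [kv_minPre_zero N x N le_rfl]
  omega

/-- The gap between the vertex labels of `x` and of its minimal-prefix modification. -/
def gap (N : ℕ) (x : EulerPath) (m : ℕ) : ℕ := kv x m - kv (minPre N x) m

lemma gap_step (N : ℕ) (x : EulerPath) {i : ℕ} (hi : N ≤ i) :
    gap N x (i + 1) = gap N x i ∨ gap N x (i + 1) + 1 = gap N x i := by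
  have hc := kv_minPre_le N x i hi
  have hl : minPre N x i = x i := minPre_ge N x hi
  unfold gap
  rw [kv_succ, kv_succ, hl]
  split_ifs <;> omega

lemma no_dec_ne (N : ℕ) (x : EulerPath) {i : ℕ} (hi : N ≤ i) (h1 : 0 < gap N x i)
    (h2 : gap N x (i + 1) = gap N x i) : (x i : ℕ) ≠ kv x i := by
  intro heq
  have hc := kv_minPre_le N x i hi
  have hc1 := kv_minPre_le N x (i + 1) (by omega)
  have hl : minPre N x i = x i := minPre_ge N x hi
  unfold gap at h1 h2
  rw [kv_succ, kv_succ, hl] at h2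
  rw [heq] at h2
  rw [if_pos le_rfl] at h2
  have hne : ¬ (kv x i ≤ kv (minPre N x) i) := by omega
  rw [if_neg hne] at h2
  omega

lemma kv_minPre_depends {N : ℕ} {x y : EulerPath} {i : ℕ} (h : ∀ t, t < i → x t = y t) :
    kv (minPre N x) i = kv (minPre N y) i := by
  refine kv_depends fun t ht => ?_
  unfold minPre
  split_ifs with h'
  · rfl
  · exact h t ht

lemma gap_depends {N : ℕ} {x y : EulerPath} {i : ℕ} (h : ∀ t, t < i → x t = y t) :
    gap N x i = gap N y i := by
  unfold gap
  rw [kv_depends h, kv_minPre_depends h]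

/-- The event: strictly positive gap at time `m`, and no decrement up to time `M`. -/
def Gset (N m M : ℕ) : Set EulerPath :=
  {x | 0 < gap N x m ∧ ∀ i, m ≤ i → i < M → gap N x (i + 1) = gap N x i}

lemma Gset_depends (N m M : ℕ) (hm : m ≤ M) (x y : EulerPath)
    (h : ∀ i, i < M → x i = y i) (hx : x ∈ Gset N m M) : y ∈ Gset N m M := by
  obtain ⟨h1, h2⟩ := hx
  have hgap : ∀ i, i ≤ M → gap N x i = gap N y i := fun i hi =>
    gap_depends (fun t ht => h t (by omega))
  refine ⟨by rw [← hgap m hm]; exact h1, fun i hi1 hi2 => ?_⟩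
  rw [← hgap i (by omega), ← hgap (i + 1) (by omega)]
  exact h2 i hi1 hi2

lemma gap_const_of {N m M : ℕ} {x : EulerPath} (hx : x ∈ Gset N m M) :
    ∀ i, m ≤ i → i ≤ M → gap N x i = gap N x m := by
  intro i
  induction i with
  | zero => intro h1 _; rw [Nat.le_zero.mp h1]
  | succ i ih =>
    intro h1 h2
    rcases Nat.lt_or_ge m (i + 1) with h3 | h3
    · rw [hx.2 i (by omega) (by omega), ih (by omega) (by omega)]
    · have : m = i + 1 := by omega
      rw [this]

section MeasMerge

variable {η : Measure EulerPath} (hη : IsSymmetricMeasure η)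

include hη

lemma Gset_bound (N m : ℕ) (hNm : N ≤ m) :
    ∀ M, m ≤ M → ((M : ℝ≥0∞) + 1) * η (Gset N m M) ≤ (m : ℝ≥0∞) + 1 := by
  haveI := hη.1
  refine Nat.le_induction ?_ ?_
  · calc ((m : ℝ≥0∞) + 1) * η (Gset N m m) ≤ ((m : ℝ≥0∞) + 1) * 1 :=
        mul_le_mul_right prob_le_one _
      _ = (m : ℝ≥0∞) + 1 := mul_one _
  · intro M hM ih
    have hstep := measure_step hη M (Gset N m M) (Gset N m (M + 1)) (fun x => kv x M)
      (fun x y h hx => Gset_depends N m M (by omega) x y h hx)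
      (fun x y h hx => Gset_depends N m (M + 1) (by omega) x y h hx)
      (fun x y h => kv_depends h)
      (fun x => by show kv x M < M + 2; have := kv_le x M; omega)
      (fun x hx => ⟨hx.1, fun i h1 h2 => hx.2 i h1 (by omega)⟩)
      (fun x hx => by
        have hgm : 0 < gap N x M := by
          rw [gap_const_of hx M (by omega) (by omega)]
          exact hx.1
        exact no_dec_ne N x (by omega) hgm (hx.2 M (by omega) (by omega)))
    have hcast : (((M + 1 : ℕ)) : ℝ≥0∞) + 1 = (M : ℝ≥0∞) + 2 := by push_cast; ring
    rw [hcast]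
    exact le_trans hstep ih

end MeasMerge

-- ===================== stabilization of antitone sequences =====================

lemma antitone_chain (f : ℕ → ℕ) (hf : ∀ i, f (i + 1) ≤ f i) : ∀ d i, f (i + d) ≤ f i := by
  intro d
  induction d with
  | zero => intro i; exact le_rfl
  | succ d ih =>
    intro i
    calc f (i + (d + 1)) = f ((i + d) + 1) := by ring_nf
      _ ≤ f (i + d) := hf _
      _ ≤ f i := ih i

lemma antitone_stab (f : ℕ → ℕ) (hf : ∀ i, f (i + 1) ≤ f i) :
    ∃ m, ∀ i, m ≤ i → f i = f m := by
  suffices h : ∀ v (f : ℕ → ℕ), (∀ i, f (i + 1) ≤ f i) → f 0 ≤ v →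
      ∃ m, ∀ i, m ≤ i → f i = f m by exact h (f 0) f hf le_rfl
  intro v
  induction v with
  | zero =>
    intro f hf h0
    refine ⟨0, fun i _ => ?_⟩
    have h1 := antitone_chain f hf i 0
    simp only [Nat.zero_add] at h1
    omega
  | succ v ihv =>
    intro f hf h0
    by_cases hc : ∀ i, f i = f 0
    · exact ⟨0, fun i _ => (hc i).trans (hc 0).symm⟩
    · push_neg at hc
      obtain ⟨i0, hi0⟩ := hc
      have hle : f i0 ≤ f 0 := by
        have := antitone_chain f hf i0 0
        simpa using this
      have hlt : f i0 < f 0 := lt_of_le_of_ne hle hi0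
      obtain ⟨m, hm⟩ := ihv (fun i => f (i0 + i)) (fun i => by
          show f (i0 + (i + 1)) ≤ f (i0 + i)
          have h2 := hf (i0 + i)
          have h3 : i0 + (i + 1) = (i0 + i) + 1 := by omega
          rw [h3]
          exact h2) (by show f (i0 + 0) ≤ v; rw [Nat.add_zero]; omega)
      refine ⟨i0 + m, fun i hi => ?_⟩
      have h1 : f (i0 + (i - i0)) = f (i0 + m) := hm (i - i0) (by omega)
      rw [show i0 + (i - i0) = i from by omega] at h1
      exact h1
-- ===================== the bad set is null; A is a.e. tail =====================

/-- The event that the gap never closes. -/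
def Gomega (N m : ℕ) : Set EulerPath :=
  {x | 0 < gap N x m ∧ ∀ i, m ≤ i → gap N x (i + 1) = gap N x i}

def BadSet (N : ℕ) : Set EulerPath := {x | ∀ M, N ≤ M → kv (minPre N x) M < kv x M}

/-- `B A N`: the modification of `x` with minimal prefix of length `N` lies in `A`. -/
def BN (A : Set EulerPath) (N : ℕ) : Set EulerPath := {x | minPre N x ∈ A}

section Final2

variable {η : Measure EulerPath} (hη : IsSymmetricMeasure η)

include hη

lemma Gomega_null (N m : ℕ) (hNm : N ≤ m) : η (Gomega N m) = 0 := by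
  haveI := hη.1
  have hfin : ((m : ℝ≥0∞) + 1) ≠ ⊤ :=
    ENNReal.add_ne_top.mpr ⟨ENNReal.natCast_ne_top m, by norm_num⟩
  have hb : ∀ M : ℕ, (M : ℝ≥0∞) * η (Gomega N m) ≤ (m : ℝ≥0∞) + 1 := by
    intro M
    rcases le_or_gt M (m + 1) with h | h
    · calc (M : ℝ≥0∞) * η (Gomega N m) ≤ (M : ℝ≥0∞) * 1 := mul_le_mul_right prob_le_one _
        _ = (M : ℝ≥0∞) := mul_one _
        _ ≤ (m : ℝ≥0∞) + 1 := by
            have : ((M : ℕ) : ℝ≥0∞) ≤ ((m + 1 : ℕ) : ℝ≥0∞) := Nat.cast_le.mpr h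
            push_cast at this
            exact this
    · have h1 : η (Gomega N m) ≤ η (Gset N m (M - 1)) :=
        measure_mono (fun x hx => ⟨hx.1, fun i hi1 _ => hx.2 i hi1⟩)
      have h2 := Gset_bound hη N m hNm (M - 1) (by omega)
      have hcast : (((M - 1 : ℕ)) : ℝ≥0∞) + 1 = (M : ℝ≥0∞) := by
        have e : (M - 1) + 1 = M := by omega
        calc (((M - 1 : ℕ)) : ℝ≥0∞) + 1 = (((M - 1) + 1 : ℕ) : ℝ≥0∞) := by push_cast; ring
          _ = (M : ℝ≥0∞) := by rw [e]
      calc (M : ℝ≥0∞) * η (Gomega N m)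
          = ((((M - 1 : ℕ)) : ℝ≥0∞) + 1) * η (Gomega N m) := by rw [hcast]
        _ ≤ ((((M - 1 : ℕ)) : ℝ≥0∞) + 1) * η (Gset N m (M - 1)) := mul_le_mul_right h1 _
        _ ≤ (m : ℝ≥0∞) + 1 := h2
  by_contra ha
  obtain ⟨M, hM⟩ := ENNReal.exists_nat_gt (ENNReal.div_lt_top hfin ha).ne
  rw [ENNReal.div_lt_iff (Or.inl ha) (Or.inr hfin)] at hM
  exact absurd (hb M) (not_le.mpr hM)

lemma bad_null (N : ℕ) : η (BadSet N) = 0 := by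
  have hsub : BadSet N ⊆ ⋃ t : ℕ, Gomega N (N + t) := by
    intro x hx
    have hf : ∀ i, gap N x (N + (i + 1)) ≤ gap N x (N + i) := by
      intro i
      have he : N + (i + 1) = (N + i) + 1 := by omega
      rw [he]
      rcases gap_step N x (show N ≤ N + i by omega) with h | h <;> omega
    obtain ⟨t0, ht0⟩ := antitone_stab (fun i => gap N x (N + i)) hf
    refine Set.mem_iUnion.mpr ⟨t0, ?_, ?_⟩
    · show 0 < gap N x (N + t0)
      have := hx (N + t0) (by omega)
      unfold gap
      omega
    · intro i hi
      have h1 : gap N x (N + ((i - N) + 1)) = gap N x (N + t0) := ht0 ((i - N) + 1) (by omega)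
      have h2 : gap N x (N + (i - N)) = gap N x (N + t0) := ht0 (i - N) (by omega)
      have e1 : N + ((i - N) + 1) = i + 1 := by omega
      have e2 : N + (i - N) = i := by omega
      rw [e1] at h1
      rw [e2] at h2
      rw [h1, h2]
  exact measure_mono_null hsub (measure_iUnion_null fun t => Gomega_null hη N (N + t) (by omega))

lemma symmdiff_null (A : Set EulerPath)
    (hinv : ∀ x, x ∉ Xmax → (x ∈ A ↔ eulerAdic x ∈ A)) (N : ℕ) :
    η ((A \ BN A N) ∪ (BN A N \ A)) = 0 := by
  refine measure_mono_null ?_ (bad_null hη N)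
  intro x hx
  by_contra hbad
  simp only [BadSet, Set.mem_setOf_eq, not_forall] at hbad
  obtain ⟨M, hM, hnlt⟩ := hbad
  have hle := kv_minPre_le N x M hM
  have heq : kv x M = kv (minPre N x) M := by omega
  have hrel : ERel M x (minPre N x) := ⟨fun t ht => (minPre_ge N x (by omega)).symm, heq⟩
  have hiff := class_inv A hinv hrel
  rcases hx with ⟨hxA, hxB⟩ | ⟨hxB, hxA⟩
  · exact hxB (hiff.mp hxA)
  · exact hxA (hiff.mpr hxB)

end Final2

-- ===================== independence of the coordinates =====================

def coordSigma (n : ℕ) : MeasurableSpace EulerPath :=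
  MeasurableSpace.comap (fun x : EulerPath => x n) inferInstance

lemma coordSigma_le (n : ℕ) : coordSigma n ≤ (inferInstance : MeasurableSpace EulerPath) :=
  (measurable_pi_apply n).comap_le

def pin (n : ℕ) : Set (Set EulerPath) := {s | ∃ v : Fin (n + 2), s = {x : EulerPath | x n = v}}

lemma pin_pi (n : ℕ) : IsPiSystem (pin n) := by
  rintro s ⟨v, rfl⟩ t ⟨v', rfl⟩ hne
  obtain ⟨x, hx1, hx2⟩ := hne
  have hvv : v = v' := by
    have h1 : x n = v := hx1
    have h2 : x n = v' := hx2
    rw [← h1, ← h2]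
  subst hvv
  rw [Set.inter_self]
  exact ⟨v, rfl⟩

lemma coordSigma_gen (n : ℕ) : coordSigma n = MeasurableSpace.generateFrom (pin n) := by
  apply le_antisymm
  · rintro t ⟨s, _, rfl⟩
    have hs : (fun x : EulerPath => x n) ⁻¹' s = ⋃ v ∈ s, {x : EulerPath | x n = v} := by
      ext x
      simp only [Set.mem_preimage, Set.mem_iUnion, Set.mem_setOf_eq, exists_prop]
      exact ⟨fun h => ⟨x n, h, rfl⟩, fun ⟨v, hv, he⟩ => he ▸ hv⟩
    rw [hs]
    exact MeasurableSet.biUnion (Set.to_countable s) fun v _ =>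
      MeasurableSpace.measurableSet_generateFrom ⟨v, rfl⟩
  · refine MeasurableSpace.generateFrom_le ?_
    rintro t ⟨v, rfl⟩
    refine ⟨{v}, MeasurableSet.singleton v, ?_⟩
    ext x
    simp
section Final3

variable {η : Measure EulerPath} (hη : IsSymmetricMeasure η)

include hη

lemma indep_coords : ProbabilityTheory.iIndep coordSigma η := by
  haveI := hη.1
  refine ProbabilityTheory.iIndepSets.iIndep (m := coordSigma) coordSigma_le pin pin_pi coordSigma_gen ?_
  rw [ProbabilityTheory.iIndepSets_iff]
  intro S f hf
  have hv : ∀ i ∈ S, ∃ v : Fin (i + 2), f i = {x : EulerPath | x i = v} := fun i hi => hf i hi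
  choose v hvspec using hv
  classical
  set w : EulerPath := fun i => if h : i ∈ S then v i h else ⟨0, by omega⟩ with hw
  have hwS : ∀ i (h : i ∈ S), w i = v i h := fun i h => dif_pos h
  have hset : (⋂ i ∈ S, f i) = {x | ∀ i ∈ S, x i = w i} := by
    ext x
    simp only [Set.mem_iInter, Set.mem_setOf_eq]
    constructor
    · intro hx i hi
      have := hx i hi
      rw [hvspec i hi] at this
      rw [hwS i hi]
      exact this
    · intro hx i hi
      rw [hvspec i hi]
      have := hx i hi
      rw [hwS i hi] at this
      exact this
  rw [hset, prod_formula' hη S w]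
  refine (Finset.prod_congr rfl fun i hi => ?_).symm
  rw [hvspec i hi]
  have hsingle : {x : EulerPath | x i = v i hi} = {x | ∀ t ∈ ({i} : Finset ℕ), x t = w t} := by
    ext x
    simp only [Set.mem_setOf_eq, Finset.mem_singleton, forall_eq]
    rw [hwS i hi]
  rw [hsingle, prod_formula' hη {i} w, Finset.prod_singleton]

end Final3

-- ===================== tail measurability of BN =====================

lemma BN_tail (A : Set EulerPath) (hA : MeasurableSet A) (M0 N : ℕ) (h : M0 ≤ N) :
    MeasurableSet[⨆ i, ⨆ (_ : M0 ≤ i), coordSigma i] (BN A N) := by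
  have hmeas : @Measurable EulerPath EulerPath (⨆ i, ⨆ (_ : M0 ≤ i), coordSigma i) _
      (minPre N) := by
    refine @measurable_pi_lambda EulerPath _ (fun n => Fin (n + 2))
      (⨆ i, ⨆ (_ : M0 ≤ i), coordSigma i) _ (minPre N) fun n => ?_
    by_cases hn : n < N
    · have he : (fun x : EulerPath => minPre N x n) = fun _ => (⟨0, by omega⟩ : Fin (n + 2)) :=
        funext fun x => if_pos hn
      rw [he]
      exact measurable_const
    · have he : (fun x : EulerPath => minPre N x n) = fun x => x n :=
        funext fun x => if_neg hn
      rw [he]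
      have h1 : coordSigma n ≤ ⨆ i, ⨆ (_ : M0 ≤ i), coordSigma i :=
        le_iSup_of_le n (le_iSup_of_le (by omega) le_rfl)
      exact Measurable.of_comap_le h1
  exact hmeas hA

-- ===================== main theorem =====================
/-- **Ergodicity of the Euler adic.** The Euler adic transformation `T` is ergodic with
respect to the symmetric measure `η`: every Borel set `A` that is invariant under `T`
(off the set of maximal paths) has measure `0` or `1`. -/
theorem euler_adic_ergodic
    (η : Measure EulerPath) (hη : IsSymmetricMeasure η)
    (A : Set EulerPath) (hA : MeasurableSet A)
    (hinv : ∀ x, x ∉ Xmax → (x ∈ A ↔ eulerAdic x ∈ A)) :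
    η A = 0 ∨ η A = 1 := by
  haveI := hη.1
  set B : Set EulerPath := ⋂ M, ⋃ N, ⋃ (_ : M ≤ N), BN A N with hB
  -- B is measurable with respect to the tail σ-algebra
  have htail : MeasurableSet[Filter.limsup coordSigma Filter.atTop] B := by
    rw [Filter.limsup_eq_iInf_iSup_of_nat, MeasurableSpace.measurableSet_iInf]
    intro M0
    have hBeq : B = ⋂ M, ⋃ N, ⋃ (_ : M + M0 ≤ N), BN A N := by
      apply Set.Subset.antisymm
      · intro x hx
        refine Set.mem_iInter.mpr fun M => ?_
        have h1 := Set.mem_iInter.mp hx (M + M0)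
        simp only [Set.mem_iUnion] at h1 ⊢
        obtain ⟨N, hN, hmem⟩ := h1
        exact ⟨N, hN, hmem⟩
      · intro x hx
        refine Set.mem_iInter.mpr fun M => ?_
        have h1 := Set.mem_iInter.mp hx M
        simp only [Set.mem_iUnion] at h1 ⊢
        obtain ⟨N, hN, hmem⟩ := h1
        exact ⟨N, by omega, hmem⟩
    rw [hBeq]
    exact MeasurableSet.iInter fun M => MeasurableSet.iUnion fun N =>
      MeasurableSet.iUnion fun hN => BN_tail A hA M0 N (by omega)
  have h01 := ProbabilityTheory.measure_zero_or_one_of_measurableSet_limsup_atTop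
    coordSigma_le (indep_coords hη) htail
  -- A and B agree almost everywhere
  have hdiff : η ((A \ B) ∪ (B \ A)) = 0 := by
    refine measure_mono_null ?_
      (measure_iUnion_null fun N => symmdiff_null hη A hinv N)
    intro x hx
    rcases hx with ⟨hxA, hxB⟩ | ⟨hxB, hxA⟩
    · rw [hB] at hxB
      simp only [Set.mem_iInter, not_forall] at hxB
      obtain ⟨M, hM⟩ := hxB
      simp only [Set.mem_iUnion, not_exists] at hM
      exact Set.mem_iUnion.mpr ⟨M, Or.inl ⟨hxA, hM M le_rfl⟩⟩
    · have h1 := Set.mem_iInter.mp hxB 0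
      simp only [Set.mem_iUnion] at h1
      obtain ⟨N, _, hmem⟩ := h1
      exact Set.mem_iUnion.mpr ⟨N, Or.inr ⟨hmem, hxA⟩⟩
  have hAB : η A = η B := by
    refine measure_congr ?_
    rw [MeasureTheory.ae_eq_set]
    exact ⟨measure_mono_null Set.subset_union_left hdiff,
      measure_mono_null Set.subset_union_right hdiff⟩
  rw [hAB]
  exact h01
end

section
/- (Proposition 2.) For ρ-almost every pair (x,x') ∈ X × X, the set {n ∈ ℕ : k_n(x) = k_n(x')} is infinite; that is, almost every pair of paths passes through a common vertex of the Euler graph at infinitely many levels. -/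
open MeasureTheory Filter
open scoped ENNReal

attribute [local instance] Classical.propDecidable

/-- Finite paths of length `M`. -/
def FP : ℕ → Type
  | 0 => PUnit
  | M + 1 => FP M × Fin (M + 2)

def FP.mk {M : ℕ} (x : FP M) (a : Fin (M + 2)) : FP (M + 1) := (x, a)

def FP.split {M : ℕ} (p : FP (M + 1)) : FP M × Fin (M + 2) := p

instance instFintypeFP : ∀ M, Fintype (FP M)
  | 0 => inferInstanceAs (Fintype PUnit)
  | M + 1 => letI := instFintypeFP M; inferInstanceAs (Fintype (FP M × Fin (M + 2)))

instance instInhabitedFP : ∀ M, Inhabited (FP M)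
  | 0 => inferInstanceAs (Inhabited PUnit)
  | M + 1 => letI := instInhabitedFP M; inferInstanceAs (Inhabited (FP M × Fin (M + 2)))

def kf : ∀ M, FP M → ℕ
  | 0, _ => 0
  | M + 1, p => if ((FP.split p).2 : ℕ) ≤ kf M (FP.split p).1 then kf M (FP.split p).1
      else kf M (FP.split p).1 + 1

lemma kf_le : ∀ M (p : FP M), kf M p ≤ M
  | 0, _ => le_refl 0
  | M + 1, p => by
      have := kf_le M (FP.split p).1
      rw [kf]; split <;> omega

lemma kf_succ_ge (M : ℕ) (p : FP (M+1)) : kf M (FP.split p).1 ≤ kf (M+1) p := by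
  rw [kf]; split <;> omega

lemma kf_succ_le (M : ℕ) (p : FP (M+1)) : kf (M+1) p ≤ kf M (FP.split p).1 + 1 := by
  rw [kf]; split <;> omega

def trunc (x : EulerPath) : ∀ M, FP M
  | 0 => PUnit.unit
  | M + 1 => (trunc x M, x M)

lemma split_trunc (x : EulerPath) (M : ℕ) : FP.split (trunc x (M+1)) = (trunc x M, x M) := rfl

lemma kv_eq_kf (x : EulerPath) : ∀ M, kv x M = kf M (trunc x M)
  | 0 => rfl
  | M + 1 => by rw [kv, kf, split_trunc, ← kv_eq_kf x M]

lemma trunc_eq_iff (x y : EulerPath) : ∀ M, trunc x M = trunc y M ↔ ∀ i < M, x i = y i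
  | 0 => by simp [trunc]; rfl
  | M + 1 => by
      constructor
      · intro h i hi
        have h1 : trunc x M = trunc y M ∧ x M = y M := Prod.mk.injEq .. ▸ h
        rcases Nat.lt_succ_iff_lt_or_eq.1 hi with hi | hi
        · exact (trunc_eq_iff x y M).1 h1.1 i hi
        · subst hi; exact h1.2
      · intro h
        show (trunc x M, x M) = (trunc y M, y M)
        rw [(trunc_eq_iff x y M).2 (fun i hi => h i (hi.trans (Nat.lt_succ_self M))),
          h M (Nat.lt_succ_self M)]

lemma trunc_surj : ∀ M (t : FP M), ∃ x : EulerPath, trunc x M = t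
  | 0, t => ⟨fun _ => 0, rfl⟩
  | M + 1, t => by
      obtain ⟨x1, hx1⟩ := trunc_surj M (FP.split t).1
      refine ⟨fun i => if h : i = M then Fin.cast (by rw [h]) (FP.split t).2 else x1 i, ?_⟩
      show (trunc _ M, _) = t
      have h1 : trunc (fun i => if h : i = M then Fin.cast (by rw [h]) (FP.split t).2 else x1 i) M
          = trunc x1 M := by
        rw [trunc_eq_iff]
        intro i hi
        rw [dif_neg (Nat.ne_of_lt hi)]
      rw [h1, hx1]
      have h2 : (if h : M = M then Fin.cast (by rw [h]) (FP.split t).2 else x1 M)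
          = (FP.split t).2 := by
        rw [dif_pos rfl]; apply Fin.ext; simp
      exact congrArg (Prod.mk (FP.split t).1) h2

abbrev QF (M : ℕ) : Type := FP M × FP M

def Df (M : ℕ) (ω : QF M) : ℤ := (kf M ω.1 : ℤ) - kf M ω.2

def rs {M : ℕ} (ω : QF (M + 1)) : QF M := ((FP.split ω.1).1, (FP.split ω.2).1)

lemma Df_step_le (M : ℕ) (ω : QF (M+1)) : Df (M+1) ω ≤ Df M (rs ω) + 1 := by
  have h1 := kf_succ_le M ω.1
  have h2 := kf_succ_ge M ω.2
  simp only [Df, rs]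
  omega

lemma Df_step_ge (M : ℕ) (ω : QF (M+1)) : Df M (rs ω) - 1 ≤ Df (M+1) ω := by
  have h1 := kf_succ_ge M ω.1
  have h2 := kf_succ_le M ω.2
  simp only [Df, rs]
  omega

def posz (N : ℕ) : ∀ M, QF M → Prop
  | 0, ω => N ≤ 0 → 0 < Df 0 ω
  | M + 1, ω => posz N M (rs ω) ∧ (N ≤ M + 1 → 0 < Df (M+1) ω)

def negz (N : ℕ) : ∀ M, QF M → Prop
  | 0, ω => N ≤ 0 → Df 0 ω < 0
  | M + 1, ω => negz N M (rs ω) ∧ (N ≤ M + 1 → Df (M+1) ω < 0)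

def noz (N : ℕ) : ∀ M, QF M → Prop
  | 0, ω => N ≤ 0 → Df 0 ω ≠ 0
  | M + 1, ω => noz N M (rs ω) ∧ (N ≤ M + 1 → Df (M+1) ω ≠ 0)

lemma posz_triv (N : ℕ) : ∀ M, M < N → ∀ ω : QF M, posz N M ω
  | 0, h, ω => by rw [posz]; omega
  | M + 1, h, ω => by
      rw [posz]
      exact ⟨posz_triv N M (by omega) _, by omega⟩

lemma negz_triv (N : ℕ) : ∀ M, M < N → ∀ ω : QF M, negz N M ω
  | 0, h, ω => by rw [negz]; omega
  | M + 1, h, ω => by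
      rw [negz]
      exact ⟨negz_triv N M (by omega) _, by omega⟩

lemma posz_last {N M : ℕ} {ω : QF M} (h : posz N M ω) (hNM : N ≤ M) : 0 < Df M ω := by
  cases M with
  | zero => rw [posz] at h; exact h (by omega)
  | succ M => rw [posz] at h; exact h.2 hNM

lemma negz_last {N M : ℕ} {ω : QF M} (h : negz N M ω) (hNM : N ≤ M) : Df M ω < 0 := by
  cases M with
  | zero => rw [negz] at h; exact h (by omega)
  | succ M => rw [negz] at h; exact h.2 hNM

lemma noz_sign {N : ℕ} (hN : 1 ≤ N) :
    ∀ M (ω : QF M), noz N M ω → posz N M ω ∨ negz N M ω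
  | 0, ω, _ => Or.inl (by rw [posz]; omega)
  | M + 1, ω, h => by
      rw [noz] at h
      rcases noz_sign hN M (rs ω) h.1 with hp | hn
      · rcases Nat.lt_or_ge M N with hMN | hMN
        · -- N = M+1 or N > M+1
          rcases Nat.lt_or_ge (M+1) N with h2 | h2
          · exact Or.inl (by rw [posz]; exact ⟨hp, by omega⟩)
          · -- N = M + 1
            have hNe : Df (M+1) ω ≠ 0 := h.2 h2
            rcases lt_or_gt_of_ne hNe with hlt | hgt
            · exact Or.inr (by rw [negz]; exact ⟨negz_triv N M hMN _, fun _ => hlt⟩)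
            · exact Or.inl (by rw [posz]; exact ⟨hp, fun _ => hgt⟩)
        · -- N ≤ M : use continuity of sign
          have hD := posz_last hp hMN
          have hge := Df_step_ge M ω
          have hNe : Df (M+1) ω ≠ 0 := h.2 (by omega)
          exact Or.inl (by rw [posz]; exact ⟨hp, fun _ => by omega⟩)
      · rcases Nat.lt_or_ge M N with hMN | hMN
        · rcases Nat.lt_or_ge (M+1) N with h2 | h2
          · exact Or.inr (by rw [negz]; exact ⟨hn, by omega⟩)
          · have hNe : Df (M+1) ω ≠ 0 := h.2 h2
            rcases lt_or_gt_of_ne hNe with hlt | hgt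
            · exact Or.inr (by rw [negz]; exact ⟨hn, fun _ => hlt⟩)
            · exact Or.inl (by rw [posz]; exact ⟨posz_triv N M hMN _, fun _ => hgt⟩)
        · have hD := negz_last hn hMN
          have hle := Df_step_le M ω
          have hNe : Df (M+1) ω ≠ 0 := h.2 (by omega)
          exact Or.inr (by rw [negz]; exact ⟨hn, fun _ => by omega⟩)

lemma rs_trunc (x y : EulerPath) (M : ℕ) :
    rs (trunc x (M+1), trunc y (M+1)) = (trunc x M, trunc y M) := rfl

lemma Df_trunc (x y : EulerPath) (M : ℕ) :
    Df M (trunc x M, trunc y M) = (kv x M : ℤ) - kv y M := by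
  rw [Df, kv_eq_kf, kv_eq_kf]

lemma noz_trunc (x y : EulerPath) (N : ℕ) :
    ∀ M, (noz N M (trunc x M, trunc y M) ↔ ∀ j, N ≤ j → j ≤ M → kv x j ≠ kv y j)
  | 0 => by
      rw [noz, Df_trunc]
      constructor
      · intro h j h1 h2
        have : j = 0 := by omega
        subst this
        intro hc
        exact h h1 (by omega)
      · intro h h0
        have := h 0 h0 le_rfl
        omega
  | M + 1 => by
      rw [noz, rs_trunc, Df_trunc, noz_trunc x y N M]
      constructor
      · intro h j h1 h2
        rcases Nat.lt_succ_iff_lt_or_eq.1 (Nat.lt_succ_of_le h2) with h3 | h3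
        · exact h.1 j h1 (by omega)
        · subst h3
          intro hc
          exact h.2 h1 (by omega)
      · intro h
        refine ⟨fun j h1 h2 => h j h1 (by omega), fun h1 hc => h (M+1) h1 le_rfl (by omega)⟩

lemma kf_mk (M : ℕ) (x : FP M) (a : Fin (M+2)) :
    kf (M+1) (FP.mk x a) = if (a : ℕ) ≤ kf M x then kf M x else kf M x + 1 := by
  rw [kf]; rfl

lemma sum_ite_le (k : ℕ) : ∀ n : ℕ,
    ∑ i ∈ Finset.range n, (if i ≤ k then (k : ℤ) else (k : ℤ) + 1)
      = n * k + n - min n (k+1) := by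
  intro n
  induction n with
  | zero => simp
  | succ n ih =>
      rw [Finset.sum_range_succ, ih]
      rcases le_or_gt (n+1) (k+1) with h | h
      · rw [if_pos (by omega), min_eq_left (by omega), min_eq_left h]
        push_cast; ring
      · rw [if_neg (by omega), min_eq_right (by omega), min_eq_right (by omega)]
        push_cast; ring

lemma sum_kf (M : ℕ) (x : FP M) :
    ∑ a : Fin (M+2), (kf (M+1) (FP.mk x a) : ℤ)
      = (M+2) * kf M x + (M+1) - kf M x := by
  have h1 : ∀ a : Fin (M+2), (kf (M+1) (FP.mk x a) : ℤ)
      = if (a : ℕ) ≤ kf M x then (kf M x : ℤ) else (kf M x : ℤ) + 1 := by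
    intro a
    rw [kf_mk]
    split <;> push_cast <;> ring
  rw [Finset.sum_congr rfl (fun a _ => h1 a),
    Fin.sum_univ_eq_sum_range (fun i => if i ≤ kf M x then (kf M x : ℤ) else (kf M x : ℤ) + 1),
    sum_ite_le, min_eq_right (by have := kf_le M x; omega)]
  push_cast; ring

lemma FP.sum_split {β : Type*} [AddCommMonoid β] {M : ℕ} (f : FP (M+1) → β) :
    ∑ p : FP (M+1), f p = ∑ x : FP M, ∑ a : Fin (M+2), f (FP.mk x a) := by
  rw [← Fintype.sum_prod_type (f := fun q : FP M × Fin (M+2) => f (FP.mk q.1 q.2))]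
  exact Fintype.sum_equiv (Equiv.refl _) _ _ (fun p => rfl)

lemma FP.card_split (M : ℕ) :
    Fintype.card (FP (M+1)) = Fintype.card (FP M) * (M+2) := by
  have h : Fintype.card (FP (M+1)) = Fintype.card (FP M × Fin (M+2)) :=
    Fintype.card_congr (Equiv.refl _)
  rw [h, Fintype.card_prod, Fintype.card_fin]

lemma card_FP : ∀ M, Fintype.card (FP M) = ∏ i ∈ Finset.range M, (i + 2)
  | 0 => rfl
  | M + 1 => by rw [FP.card_split, card_FP M, Finset.prod_range_succ]

noncomputable def Sd (N M : ℕ) : ℤ := ∑ ω : QF M, if posz N M ω then Df M ω else 0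

lemma inner_step (N M : ℕ) (hNM : N ≤ M) (x y : FP M) :
    ∑ a : Fin (M+2), ∑ b : Fin (M+2),
        (if posz N (M+1) (FP.mk x a, FP.mk y b) then Df (M+1) (FP.mk x a, FP.mk y b) else 0)
      = (M+1) * (M+2) * (if posz N M (x, y) then Df M (x, y) else 0) := by
  by_cases hp : posz N M (x, y)
  · have hD : 0 < Df M (x, y) := posz_last hp hNM
    have hterm : ∀ a b, (if posz N (M+1) (FP.mk x a, FP.mk y b)
        then Df (M+1) (FP.mk x a, FP.mk y b) else 0)
        = (kf (M+1) (FP.mk x a) : ℤ) - kf (M+1) (FP.mk y b) := by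
      intro a b
      have hDf : Df (M+1) (FP.mk x a, FP.mk y b)
          = (kf (M+1) (FP.mk x a) : ℤ) - kf (M+1) (FP.mk y b) := rfl
      have hrs : rs (FP.mk x a, FP.mk y b) = (x, y) := rfl
      have hge := Df_step_ge M (FP.mk x a, FP.mk y b)
      rw [hrs] at hge
      have hpos : posz N (M+1) (FP.mk x a, FP.mk y b)
          ↔ (posz N M (x, y) ∧ (N ≤ M + 1 → 0 < Df (M+1) (FP.mk x a, FP.mk y b))) := by
        rw [posz, hrs]
      rcases lt_or_eq_of_le (by omega : (0:ℤ) ≤ Df (M+1) (FP.mk x a, FP.mk y b)) with h0 | h0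
      · rw [if_pos (hpos.2 ⟨hp, fun _ => h0⟩), hDf]
      · rw [if_neg (fun hc => by have := (hpos.1 hc).2 (by omega); omega), ← hDf, ← h0]
    rw [if_pos hp]
    calc ∑ a : Fin (M+2), ∑ b : Fin (M+2),
          (if posz N (M+1) (FP.mk x a, FP.mk y b) then Df (M+1) (FP.mk x a, FP.mk y b) else 0)
        = ∑ a : Fin (M+2), ∑ b : Fin (M+2),
            ((kf (M+1) (FP.mk x a) : ℤ) - kf (M+1) (FP.mk y b)) := by
          exact Finset.sum_congr rfl fun a _ => Finset.sum_congr rfl fun b _ => hterm a b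
      _ = ∑ a : Fin (M+2), ((M+2) * (kf (M+1) (FP.mk x a) : ℤ)
            - ((M+2) * kf M y + (M+1) - kf M y)) := by
          refine Finset.sum_congr rfl fun a _ => ?_
          rw [Finset.sum_sub_distrib, Finset.sum_const, sum_kf, Finset.card_univ,
            Fintype.card_fin, nsmul_eq_mul]
          push_cast; ring
      _ = (M+2) * ((M+2) * kf M x + (M+1) - kf M x)
            - (M+2) * ((M+2) * kf M y + (M+1) - kf M y) := by
          rw [Finset.sum_sub_distrib, Finset.sum_const, ← Finset.mul_sum, sum_kf,
            Finset.card_univ, Fintype.card_fin, nsmul_eq_mul]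
          push_cast; ring
      _ = (M+1) * (M+2) * Df M (x, y) := by
          have : Df M (x, y) = (kf M x : ℤ) - kf M y := rfl
          rw [this]; push_cast; ring
  · have hterm : ∀ a b, (if posz N (M+1) (FP.mk x a, FP.mk y b)
        then Df (M+1) (FP.mk x a, FP.mk y b) else 0) = 0 := by
      intro a b
      rw [if_neg]
      intro hc
      rw [posz] at hc
      exact hp hc.1
    rw [if_neg hp]
    simp only [hterm, Finset.sum_const_zero, mul_zero]

lemma Sd_step (N M : ℕ) (hNM : N ≤ M) : Sd N (M+1) = (M+1) * (M+2) * Sd N M := by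
  rw [Sd, Sd]
  rw [Fintype.sum_prod_type]
  rw [FP.sum_split (fun p => ∑ q : FP (M+1),
    (if posz N (M+1) (p, q) then Df (M+1) (p, q) else 0))]
  have h1 : ∀ x : FP M, ∀ a : Fin (M+2),
      (∑ q : FP (M+1), (if posz N (M+1) (FP.mk x a, q) then Df (M+1) (FP.mk x a, q) else 0))
      = ∑ y : FP M, ∑ b : Fin (M+2),
          (if posz N (M+1) (FP.mk x a, FP.mk y b) then Df (M+1) (FP.mk x a, FP.mk y b) else 0) :=
    fun x a => FP.sum_split _
  calc ∑ x : FP M, ∑ a : Fin (M+2), ∑ q : FP (M+1),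
          (if posz N (M+1) (FP.mk x a, q) then Df (M+1) (FP.mk x a, q) else 0)
      = ∑ x : FP M, ∑ a : Fin (M+2), ∑ y : FP M, ∑ b : Fin (M+2),
          (if posz N (M+1) (FP.mk x a, FP.mk y b) then Df (M+1) (FP.mk x a, FP.mk y b) else 0) := by
        exact Finset.sum_congr rfl fun x _ => Finset.sum_congr rfl fun a _ => h1 x a
    _ = ∑ x : FP M, ∑ y : FP M, ∑ a : Fin (M+2), ∑ b : Fin (M+2),
          (if posz N (M+1) (FP.mk x a, FP.mk y b) then Df (M+1) (FP.mk x a, FP.mk y b) else 0) := by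
        exact Finset.sum_congr rfl fun x _ => Finset.sum_comm
    _ = ∑ x : FP M, ∑ y : FP M, (M+1) * (M+2) * (if posz N M (x, y) then Df M (x, y) else 0) := by
        exact Finset.sum_congr rfl fun x _ => Finset.sum_congr rfl fun y _ =>
          inner_step N M hNM x y
    _ = (M+1) * (M+2) * ∑ x : FP M, ∑ y : FP M, (if posz N M (x, y) then Df M (x, y) else 0) := by
        rw [Finset.mul_sum]
        exact Finset.sum_congr rfl fun x _ => (Finset.mul_sum _ _ _).symm
    _ = (M+1) * (M+2) * ∑ ω : QF M, (if posz N M ω then Df M ω else 0) := by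
        rw [Fintype.sum_prod_type]

lemma cardQF_succ (M : ℕ) :
    (Fintype.card (QF (M+1)) : ℤ) = (M+2)^2 * Fintype.card (QF M) := by
  rw [Fintype.card_prod, Fintype.card_prod, FP.card_split]
  push_cast; ring

lemma Sd_invariant (N : ℕ) : ∀ M, N ≤ M →
    (M+1 : ℤ) * Sd N M * (Fintype.card (QF N) : ℤ)
      = (N+1 : ℤ) * Sd N N * (Fintype.card (QF M) : ℤ) := by
  refine Nat.le_induction rfl ?_
  intro M hNM ih
  rw [Sd_step N M hNM, cardQF_succ]
  push_cast
  push_cast at ih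
  linear_combination ((M : ℤ) + 2)^2 * ih

lemma Sd_base (N : ℕ) : Sd N N ≤ (N : ℤ) * Fintype.card (QF N) := by
  rw [Sd]
  calc (∑ ω : QF N, if posz N N ω then Df N ω else 0)
      ≤ ∑ _ω : QF N, (N : ℤ) := by
        refine Finset.sum_le_sum fun ω _ => ?_
        have h1 := kf_le N ω.1
        have h2 := kf_le N ω.2
        have h3 : Df N ω = (kf N ω.1 : ℤ) - kf N ω.2 := rfl
        split <;> omega
    _ = (Fintype.card (QF N) : ℤ) * N := by
        rw [Finset.sum_const, Finset.card_univ, nsmul_eq_mul]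
    _ = (N : ℤ) * Fintype.card (QF N) := mul_comm _ _

lemma cp_le_Sd (N M : ℕ) (hNM : N ≤ M) :
    ((Finset.univ.filter (posz N M)).card : ℤ) ≤ Sd N M := by
  rw [Finset.card_filter, Sd]
  push_cast
  refine Finset.sum_le_sum fun ω _ => ?_
  by_cases h : posz N M ω
  · rw [if_pos h, if_pos h]
    have := posz_last h hNM
    omega
  · rw [if_neg h, if_neg h]

def sw {M : ℕ} (ω : QF M) : QF M := (ω.2, ω.1)

lemma Df_sw (M : ℕ) (ω : QF M) : Df M (sw ω) = - Df M ω := by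
  simp only [Df, sw]; ring

lemma negz_iff_posz_sw (N : ℕ) : ∀ M (ω : QF M), (negz N M ω ↔ posz N M (sw ω))
  | 0, ω => by
      rw [negz, posz, Df_sw]
      constructor <;> intro h h0 <;> have := h h0 <;> omega
  | M + 1, ω => by
      rw [negz, posz, show rs (sw ω) = sw (rs ω) from rfl, ← negz_iff_posz_sw N M (rs ω),
        Df_sw]
      constructor <;> rintro ⟨h1, h2⟩ <;> exact ⟨h1, fun h => by have := h2 h; omega⟩

lemma card_negz_eq (N M : ℕ) :
    (Finset.univ.filter (negz N M)).card = (Finset.univ.filter (posz N M)).card := by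
  refine Finset.card_bij' (fun ω _ => sw ω) (fun ω _ => sw ω) ?_ ?_ ?_ ?_
  · intro ω hω
    rw [Finset.mem_filter] at hω ⊢
    exact ⟨Finset.mem_univ _, ((negz_iff_posz_sw N M ω).1 hω.2)⟩
  · intro ω hω
    rw [Finset.mem_filter] at hω ⊢
    refine ⟨Finset.mem_univ _, ?_⟩
    rw [negz_iff_posz_sw N M (sw ω)]
    exact hω.2
  · intro ω _; rfl
  · intro ω _; rfl

lemma card_noz_le (N M : ℕ) (hN : 1 ≤ N) :
    (Finset.univ.filter (noz N M)).card ≤ 2 * (Finset.univ.filter (posz N M)).card := by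
  have hsub : Finset.univ.filter (noz N M)
      ⊆ (Finset.univ.filter (posz N M)) ∪ (Finset.univ.filter (negz N M)) := by
    intro ω hω
    rw [Finset.mem_filter] at hω
    rcases noz_sign hN M ω hω.2 with h | h
    · exact Finset.mem_union_left _ (Finset.mem_filter.2 ⟨Finset.mem_univ _, h⟩)
    · exact Finset.mem_union_right _ (Finset.mem_filter.2 ⟨Finset.mem_univ _, h⟩)
  calc (Finset.univ.filter (noz N M)).card
      ≤ ((Finset.univ.filter (posz N M)) ∪ (Finset.univ.filter (negz N M))).card :=
        Finset.card_le_card hsub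
    _ ≤ (Finset.univ.filter (posz N M)).card + (Finset.univ.filter (negz N M)).card :=
        Finset.card_union_le _ _
    _ = 2 * (Finset.univ.filter (posz N M)).card := by rw [card_negz_eq]; ring

lemma count_posz (N M : ℕ) (hNM : N ≤ M) :
    (M+1) * (Finset.univ.filter (posz N M)).card ≤ (N+1) * N * Fintype.card (QF M) := by
  have hpos : (0 : ℤ) < (Fintype.card (QF N) : ℤ) := by
    exact_mod_cast Fintype.card_pos
  have key : ((M:ℤ)+1) * (Finset.univ.filter (posz N M)).card * (Fintype.card (QF N) : ℤ)
      ≤ ((N:ℤ)+1) * N * Fintype.card (QF M) * (Fintype.card (QF N) : ℤ) := by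
    calc ((M:ℤ)+1) * (Finset.univ.filter (posz N M)).card * (Fintype.card (QF N) : ℤ)
        ≤ ((M:ℤ)+1) * Sd N M * (Fintype.card (QF N) : ℤ) := by
          exact mul_le_mul_of_nonneg_right
            (mul_le_mul_of_nonneg_left (cp_le_Sd N M hNM) (by positivity)) (le_of_lt hpos)
      _ = ((N:ℤ)+1) * Sd N N * (Fintype.card (QF M) : ℤ) := Sd_invariant N M hNM
      _ ≤ ((N:ℤ)+1) * ((N:ℤ) * Fintype.card (QF N)) * (Fintype.card (QF M) : ℤ) := by
          exact mul_le_mul_of_nonneg_right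
            (mul_le_mul_of_nonneg_left (Sd_base N) (by positivity)) (by positivity)
      _ = ((N:ℤ)+1) * N * Fintype.card (QF M) * (Fintype.card (QF N) : ℤ) := by ring
  have := le_of_mul_le_mul_right key hpos
  exact_mod_cast this

lemma count_noz (N M : ℕ) (hN : 1 ≤ N) (hNM : N ≤ M) :
    (M+1) * (Finset.univ.filter (noz N M)).card
      ≤ 2 * ((N+1) * N) * Fintype.card (QF M) := by
  calc (M+1) * (Finset.univ.filter (noz N M)).card
      ≤ (M+1) * (2 * (Finset.univ.filter (posz N M)).card) :=
        Nat.mul_le_mul_left _ (card_noz_le N M hN)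
    _ = 2 * ((M+1) * (Finset.univ.filter (posz N M)).card) := by ring
    _ ≤ 2 * ((N+1) * N * Fintype.card (QF M)) :=
        Nat.mul_le_mul_left _ (count_posz N M hNM)
    _ = 2 * ((N+1) * N) * Fintype.card (QF M) := by ring
lemma cyl_eq (M : ℕ) (t : FP M) (c : EulerPath) (hc : trunc c M = t) :
    {x : EulerPath | trunc x M = t} = {x : EulerPath | ∀ i < M, x i = c i} := by
  ext x
  simp only [Set.mem_setOf_eq, ← hc, trunc_eq_iff]

lemma meas_cyl (M : ℕ) (t : FP M) : MeasurableSet {x : EulerPath | trunc x M = t} := by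
  obtain ⟨c, hc⟩ := trunc_surj M t
  rw [cyl_eq M t c hc]
  have h : {x : EulerPath | ∀ i < M, x i = c i}
      = ⋂ i, ⋂ (_ : i < M), (fun x : EulerPath => x i) ⁻¹' {c i} := by
    ext x; simp
  rw [h]
  exact MeasurableSet.iInter fun i => MeasurableSet.iInter fun _ =>
    (measurable_pi_apply i) (measurableSet_singleton _)

lemma eta_cyl {η : Measure EulerPath} (hη : IsSymmetricMeasure η) (M : ℕ) (t : FP M) :
    η {x : EulerPath | trunc x M = t} = ∏ i ∈ Finset.range M, ((i : ℝ≥0∞) + 2)⁻¹ := by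
  obtain ⟨c, hc⟩ := trunc_surj M t
  rw [cyl_eq M t c hc]
  exact hη.2 M c

lemma measure_event {η : Measure EulerPath} (hη : IsSymmetricMeasure η) (M : ℕ)
    (φ : QF M → Prop) :
    (η.prod η) {p : EulerPath × EulerPath | φ (trunc p.1 M, trunc p.2 M)}
      = (Finset.univ.filter φ).card * (∏ i ∈ Finset.range M, ((i : ℝ≥0∞) + 2)⁻¹)^2 := by
  haveI := hη.1
  have hset : {p : EulerPath × EulerPath | φ (trunc p.1 M, trunc p.2 M)}
      = ⋃ t ∈ Finset.univ.filter φ,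
          ({x : EulerPath | trunc x M = t.1} ×ˢ {x : EulerPath | trunc x M = t.2}) := by
    ext p
    simp only [Set.mem_setOf_eq, Set.mem_iUnion, Finset.mem_filter, Finset.mem_univ, true_and,
      Set.mem_prod]
    constructor
    · intro h
      exact ⟨(trunc p.1 M, trunc p.2 M), h, rfl, rfl⟩
    · rintro ⟨t, ht, h1, h2⟩
      rw [h1, h2]
      exact ht
  rw [hset, measure_biUnion_finset ?disj ?meas]
  case disj =>
    intro t _ s _ hts
    refine Set.disjoint_left.2 fun p hp hq => hts ?_
    have h1 : trunc p.1 M = t.1 := hp.1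
    have h2 : trunc p.2 M = t.2 := hp.2
    have h3 : trunc p.1 M = s.1 := hq.1
    have h4 : trunc p.2 M = s.2 := hq.2
    exact Prod.ext (h1 ▸ h3) (h2 ▸ h4)
  case meas =>
    exact fun t _ => (meas_cyl M t.1).prod (meas_cyl M t.2)
  calc ∑ t ∈ Finset.univ.filter φ,
        (η.prod η) ({x : EulerPath | trunc x M = t.1} ×ˢ {x : EulerPath | trunc x M = t.2})
      = ∑ _t ∈ Finset.univ.filter φ, (∏ i ∈ Finset.range M, ((i : ℝ≥0∞) + 2)⁻¹)^2 := by
        refine Finset.sum_congr rfl fun t _ => ?_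
        rw [Measure.prod_prod, eta_cyl hη, eta_cyl hη, sq]
    _ = (Finset.univ.filter φ).card * (∏ i ∈ Finset.range M, ((i : ℝ≥0∞) + 2)⁻¹)^2 := by
        rw [Finset.sum_const, nsmul_eq_mul]

lemma cardQF_mul_w (M : ℕ) :
    (Fintype.card (QF M) : ℝ≥0∞) * (∏ i ∈ Finset.range M, ((i : ℝ≥0∞) + 2)⁻¹)^2 = 1 := by
  have hc : (Fintype.card (QF M) : ℝ≥0∞) = (∏ i ∈ Finset.range M, ((i : ℝ≥0∞) + 2))^2 := by
    rw [Fintype.card_prod, card_FP]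
    push_cast
    ring
  rw [hc, ← mul_pow, ← Finset.prod_mul_distrib]
  have h1 : ∀ i ∈ Finset.range M, ((i : ℝ≥0∞) + 2) * ((i : ℝ≥0∞) + 2)⁻¹ = 1 := by
    intro i _
    refine ENNReal.mul_inv_cancel ?_ ?_
    · intro h
      rw [add_eq_zero] at h
      exact two_ne_zero h.2
    · exact ENNReal.add_ne_top.2 ⟨ENNReal.natCast_ne_top i, by simp⟩
  rw [Finset.prod_congr rfl h1, Finset.prod_const_one, one_pow]

/-- **Proposition 2.** For `ρ`-almost every pair `(x,x')` (where `ρ = η × η`), the two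
paths pass through a common vertex of the Euler graph at infinitely many levels:
`{n : k_n(x) = k_n(x')}` is infinite. -/
theorem euler_paths_meet_infinitely_often
    (η : Measure EulerPath) (hη : IsSymmetricMeasure η) :
    ∀ᵐ p ∂(η.prod η), {n : ℕ | kv p.1 n = kv p.2 n}.Infinite := by
  haveI := hη.1
  have hA : ∀ N : ℕ, 1 ≤ N →
      (η.prod η) {p : EulerPath × EulerPath | ∀ n, N ≤ n → kv p.1 n ≠ kv p.2 n} = 0 := by
    intro N hN
    have hbound : ∀ M, N ≤ M →
        (η.prod η) {p : EulerPath × EulerPath | ∀ n, N ≤ n → kv p.1 n ≠ kv p.2 n}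
          ≤ ((2 * ((N+1) * N) : ℕ) : ℝ≥0∞) * ((M : ℝ≥0∞) + 1)⁻¹ := by
      intro M hNM
      have hsub : {p : EulerPath × EulerPath | ∀ n, N ≤ n → kv p.1 n ≠ kv p.2 n}
          ⊆ {p : EulerPath × EulerPath | noz N M (trunc p.1 M, trunc p.2 M)} := by
        intro p hp
        exact (noz_trunc p.1 p.2 N M).2 fun j h1 _ => hp j h1
      refine le_trans (measure_mono hsub) ?_
      rw [measure_event hη M (noz N M)]
      -- arithmetic in ℝ≥0∞
      set w : ℝ≥0∞ := ∏ i ∈ Finset.range M, ((i : ℝ≥0∞) + 2)⁻¹ with hw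
      have hMne : ((M : ℝ≥0∞) + 1) ≠ 0 := by
        intro h
        rw [add_eq_zero] at h
        exact one_ne_zero h.2
      have hMnetop : ((M : ℝ≥0∞) + 1) ≠ ⊤ :=
        ENNReal.add_ne_top.2 ⟨ENNReal.natCast_ne_top M, by simp⟩
      have hcount : (((M+1) * (Finset.univ.filter (noz N M)).card : ℕ) : ℝ≥0∞)
          ≤ ((2 * ((N+1) * N) * Fintype.card (QF M) : ℕ) : ℝ≥0∞) :=
        Nat.cast_le.2 (count_noz N M hN hNM)
      push_cast at hcount
      have step1 : ((M : ℝ≥0∞) + 1) * (((Finset.univ.filter (noz N M)).card : ℝ≥0∞) * w^2)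
          ≤ ((2 * ((N+1) * N) : ℕ) : ℝ≥0∞) * ((Fintype.card (QF M) : ℝ≥0∞) * w^2) := by
        calc ((M : ℝ≥0∞) + 1) * (((Finset.univ.filter (noz N M)).card : ℝ≥0∞) * w^2)
            = (((M : ℝ≥0∞) + 1) * ((Finset.univ.filter (noz N M)).card : ℝ≥0∞)) * w^2 := by
              ring
          _ ≤ (((2 * ((N+1) * N) : ℕ) : ℝ≥0∞) * (Fintype.card (QF M) : ℝ≥0∞)) * w^2 := by
              refine mul_le_mul_left ?_ _
              push_cast
              convert hcount using 2 <;> push_cast <;> ring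
          _ = ((2 * ((N+1) * N) : ℕ) : ℝ≥0∞) * ((Fintype.card (QF M) : ℝ≥0∞) * w^2) := by
              ring
      rw [cardQF_mul_w M, mul_one] at step1
      calc ((Finset.univ.filter (noz N M)).card : ℝ≥0∞) * w^2
          = ((M : ℝ≥0∞) + 1)⁻¹ * (((M : ℝ≥0∞) + 1)
              * (((Finset.univ.filter (noz N M)).card : ℝ≥0∞) * w^2)) := by
            rw [← mul_assoc, ENNReal.inv_mul_cancel hMne hMnetop, one_mul]
        _ ≤ ((M : ℝ≥0∞) + 1)⁻¹ * ((2 * ((N+1) * N) : ℕ) : ℝ≥0∞) := mul_le_mul_right step1 _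
        _ = ((2 * ((N+1) * N) : ℕ) : ℝ≥0∞) * ((M : ℝ≥0∞) + 1)⁻¹ := mul_comm _ _
    -- conclude by letting M → ∞
    have ht : Tendsto (fun M : ℕ => ((2 * ((N+1) * N) : ℕ) : ℝ≥0∞) * ((M : ℝ≥0∞) + 1)⁻¹)
        atTop (nhds 0) := by
      have h1 : Tendsto (fun M : ℕ => ((M : ℝ≥0∞) + 1)⁻¹) atTop (nhds 0) := by
        have h2 : Tendsto (fun M : ℕ => (((M + 1 : ℕ)) : ℝ≥0∞)⁻¹) atTop (nhds 0) :=
          ENNReal.tendsto_inv_nat_nhds_zero.comp (tendsto_add_atTop_nat 1)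
        convert h2 using 2 with M
        push_cast
        ring
      have := ENNReal.Tendsto.const_mul h1
        (Or.inr (ENNReal.natCast_ne_top (2 * ((N+1) * N))))
      simpa using this
    have hle : (η.prod η) {p : EulerPath × EulerPath | ∀ n, N ≤ n → kv p.1 n ≠ kv p.2 n}
        ≤ 0 :=
      ge_of_tendsto ht (Filter.eventually_atTop.2 ⟨N, fun M hM => hbound M hM⟩)
    exact le_antisymm hle (zero_le)
  rw [MeasureTheory.ae_iff]
  have hsub : {p : EulerPath × EulerPath | ¬ ({n : ℕ | kv p.1 n = kv p.2 n}).Infinite}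
      ⊆ ⋃ N : ℕ, {p : EulerPath × EulerPath | ∀ n, N + 1 ≤ n → kv p.1 n ≠ kv p.2 n} := by
    intro p hp
    rw [Set.mem_setOf_eq, Set.not_infinite] at hp
    obtain ⟨B, hB⟩ := hp.bddAbove
    refine Set.mem_iUnion.2 ⟨B, fun n hn hc => ?_⟩
    have := hB hc
    omega
  refine le_antisymm ?_ (zero_le)
  calc (η.prod η) {p : EulerPath × EulerPath | ¬ ({n : ℕ | kv p.1 n = kv p.2 n}).Infinite}
      ≤ (η.prod η) (⋃ N : ℕ,
          {p : EulerPath × EulerPath | ∀ n, N + 1 ≤ n → kv p.1 n ≠ kv p.2 n}) :=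
        measure_mono hsub
    _ ≤ ∑' N : ℕ, (η.prod η)
          {p : EulerPath × EulerPath | ∀ n, N + 1 ≤ n → kv p.1 n ≠ kv p.2 n} :=
        measure_iUnion_le _
    _ = 0 := by
        rw [ENNReal.tsum_eq_zero]
        exact fun N => hA (N+1) (by omega)
end
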